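/- Let 𝔯 ⊆ [0,1] ∩ ℚ be a finite set with 0, 1 ∈ 𝔯 and let 𝒩 be a finite set of positive integers. Then for every real number b ∈ [0,1], the set {b' ∈ Γ(𝒩, Φ(𝔯)) : b' ≤ b} is nonempty and has a greatest element; in particular b_{𝒩_Φ} is well defined. -/

import Mathlib

open scoped BigOperators

/-- The hyperstandard set `Φ(𝔯) = {1 - r/l | r ∈ 𝔯, l ∈ ℤ_{>0}} ∩ [0,1]` associated to a
set of rationals `𝔯`. -/
def Phi (R : Set ℚ) : Set ℝ :=
  {x : ℝ | (∃ r ∈ R, ∃ l : ℕ, 0 < l ∧ x = 1 - (r : ℝ) / l) ∧ 0 ≤ x ∧ x ≤ 1}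

/-- The set `Γ(𝒩, Φ(𝔯)) = {1 - r/l + (1/l)·Σ_{n∈𝒩} m_n/(n+1)} ∩ [0,1]`. -/
def Gamma (N : Finset ℕ) (R : Set ℚ) : Set ℝ :=
  {x : ℝ | (∃ r ∈ R, ∃ l : ℕ, 0 < l ∧ ∃ m : ℕ → ℕ,
      x = 1 - (r : ℝ) / l + (1 / (l : ℝ)) * ∑ n ∈ N, (m n : ℝ) / ((n : ℝ) + 1)) ∧
    0 ≤ x ∧ x ≤ 1}

lemma int_of_den_dvd (r : ℚ) (c : ℕ) (h : r.den ∣ c) : ∃ z : ℤ, (r * c : ℚ) = (z : ℚ) := by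
  obtain ⟨c', rfl⟩ := h
  refine ⟨r.num * c', ?_⟩
  push_cast
  rw [← mul_assoc, Rat.mul_den_eq_num]

/-- For every `b ∈ [0,1]`, the set `{b' ∈ Γ(𝒩, Φ(𝔯)) : b' ≤ b}` is nonempty
and has a greatest element, so `b_{𝒩_Φ}` is well defined. -/
theorem stmt7 (R : Set ℚ) (hRfin : R.Finite) (hRsub : R ⊆ Set.Icc 0 1)
    (h0R : (0 : ℚ) ∈ R) (h1R : (1 : ℚ) ∈ R)
    (N : Finset ℕ) (hN : ∀ n ∈ N, 0 < n)
    (b : ℝ) (hb : b ∈ Set.Icc (0 : ℝ) 1) :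
    {b' ∈ Gamma N R | b' ≤ b}.Nonempty ∧
      ∃ bn : ℝ, IsGreatest {b' ∈ Gamma N R | b' ≤ b} bn := by
  obtain ⟨hb0, hb1⟩ := hb
  have h0Γ : (0 : ℝ) ∈ Gamma N R := by
    refine ⟨⟨1, h1R, 1, one_pos, fun _ => 0, by norm_num⟩, le_refl _, zero_le_one⟩
  have hne : {b' ∈ Gamma N R | b' ≤ b}.Nonempty := ⟨0, h0Γ, hb0⟩
  refine ⟨hne, ?_⟩
  rcases eq_or_lt_of_le hb1 with hb1 | hb1
  · -- case b = 1
    subst hb1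
    refine ⟨1, ⟨⟨⟨0, h0R, 1, one_pos, fun _ => 0, by norm_num⟩, zero_le_one, le_refl _⟩,
      le_refl _⟩, ?_⟩
    rintro x ⟨⟨_, _, hx1⟩, _⟩
    exact hx1
  · -- case b < 1
    set A : ℕ := ∏ r ∈ hRfin.toFinset, r.den with hAdef
    set D : ℕ := ∏ n ∈ N, (n + 1) with hDdef
    have hA : 0 < A := Finset.prod_pos fun r _ => r.pos
    have hD : 0 < D := Finset.prod_pos fun n _ => Nat.succ_pos n
    set K : ℕ := A * D with hKdef
    have hK : 0 < K := Nat.mul_pos hA hD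
    have hKR : (0 : ℝ) < (K : ℝ) := by exact_mod_cast hK
    set lmax : ℕ := ⌈1 / (1 - b)⌉₊ with hlmaxdef
    have hsub : {b' ∈ Gamma N R | b' ≤ b} ⊆
        ↑((Finset.Icc 1 K ×ˢ Finset.Icc 1 lmax).image
          (fun p : ℕ × ℕ => 1 - (p.1 : ℝ) / ((K : ℝ) * p.2))) := by
      rintro x ⟨⟨⟨r, hr, l, hl, m, hx⟩, hx0, hx1⟩, hxb⟩
      have hlR : (0 : ℝ) < (l : ℝ) := by exact_mod_cast hl
      set s : ℚ := ∑ n ∈ N, (m n : ℚ) / ((n : ℚ) + 1) with hsdef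
      set q : ℚ := r - s with hqdef
      have hsR : ((s : ℚ) : ℝ) = ∑ n ∈ N, (m n : ℝ) / ((n : ℝ) + 1) := by
        rw [hsdef]; push_cast; rfl
      have hxq : x = 1 - (q : ℝ) / l := by
        rw [hx, hqdef]
        push_cast [hsR]
        ring
      have hs0 : 0 ≤ s := by
        rw [hsdef]
        apply Finset.sum_nonneg
        intro n _
        positivity
      have hr01 := hRsub hr
      have hq1 : q ≤ 1 := by
        have := hr01.2
        rw [hqdef]; linarith
      have hql : (l : ℝ) * (1 - b) ≤ (q : ℝ) := by
        have h1 : (1 - b) ≤ (q : ℝ) / l := by linarith [hxq ▸ hxb]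
        calc (l : ℝ) * (1 - b) ≤ (l : ℝ) * ((q : ℝ) / l) := by
              apply mul_le_mul_of_nonneg_left h1 (le_of_lt hlR)
          _ = (q : ℝ) := by field_simp
      have hq0 : 0 < (q : ℝ) := lt_of_lt_of_le (mul_pos hlR (by linarith)) hql
      have hq0' : 0 < q := by exact_mod_cast hq0
      -- integrality: q * K is an integer
      have hrden : r.den ∣ A := Finset.dvd_prod_of_mem _ (hRfin.mem_toFinset.mpr hr)
      obtain ⟨z1, hz1⟩ := int_of_den_dvd r A hrden
      set j2 : ℕ := ∑ n ∈ N, m n * (D / (n + 1)) with hj2def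
      have hsD : s * (D : ℚ) = (j2 : ℚ) := by
        rw [hsdef, hj2def, Finset.sum_mul, Nat.cast_sum]
        apply Finset.sum_congr rfl
        intro n hn
        have hd : (n + 1) ∣ D := Finset.dvd_prod_of_mem _ hn
        have hcast : ((D / (n + 1) : ℕ) : ℚ) = (D : ℚ) / ((n : ℚ) + 1) := by
          rw [Nat.cast_div hd (by positivity)]
          push_cast
          ring
        push_cast [hcast]
        have hne' : ((n : ℚ) + 1) ≠ 0 := by positivity
        field_simp
      set jz : ℤ := z1 * D - (j2 : ℤ) * A with hjzdef
      have hqK : q * (K : ℚ) = (jz : ℚ) := by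
        rw [hjzdef, hqdef, hKdef]
        push_cast
        linear_combination (D : ℚ) * hz1 - (A : ℚ) * hsD
      have hKQ : (0 : ℚ) < (K : ℚ) := by exact_mod_cast hK
      have hjz0 : 0 < jz := by
        have : (0 : ℚ) < (jz : ℚ) := by rw [← hqK]; positivity
        exact_mod_cast this
      have hjzK : jz ≤ (K : ℤ) := by
        have : (jz : ℚ) ≤ (K : ℚ) := by
          rw [← hqK]
          calc q * (K : ℚ) ≤ 1 * (K : ℚ) := by
                apply mul_le_mul_of_nonneg_right hq1 (le_of_lt hKQ)
            _ = (K : ℚ) := one_mul _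
        exact_mod_cast this
      set j : ℕ := jz.toNat with hjdef
      have hjcast : ((j : ℤ) : ℚ) = (jz : ℚ) := by
        rw [hjdef, Int.toNat_of_nonneg (le_of_lt hjz0)]
      have hjmem : j ∈ Finset.Icc 1 K := by
        rw [Finset.mem_Icc]
        constructor
        · have : (1 : ℤ) ≤ jz := hjz0
          omega
        · omega
      have hlmem : l ∈ Finset.Icc 1 lmax := by
        rw [Finset.mem_Icc]
        refine ⟨hl, ?_⟩
        have hq1R : (q : ℝ) ≤ 1 := by exact_mod_cast hq1
        have hb' : (0 : ℝ) < 1 - b := by linarith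
        have hlle : (l : ℝ) ≤ 1 / (1 - b) := by
          rw [le_div_iff₀ hb']
          linarith
        have := hlle.trans (Nat.le_ceil _)
        exact_mod_cast this
      have hxval : x = 1 - (j : ℝ) / ((K : ℝ) * l) := by
        have hqR : (q : ℝ) = (jz : ℝ) / (K : ℝ) := by
          have : ((q * (K : ℚ) : ℚ) : ℝ) = ((jz : ℚ) : ℝ) := by exact_mod_cast hqK
          push_cast at this
          field_simp
          linarith [this]
        have hjR : (j : ℝ) = (jz : ℝ) := by exact_mod_cast hjcast
        rw [hxq, hqR, hjR]
        field_simp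
      simp only [Finset.coe_image, Set.mem_image, Finset.mem_coe, Finset.mem_product]
      exact ⟨(j, l), ⟨hjmem, hlmem⟩, hxval.symm⟩
    have hfin : {b' ∈ Gamma N R | b' ≤ b}.Finite :=
      Set.Finite.subset (Finset.finite_toSet _) hsub
    obtain ⟨a, haT, ha⟩ := hfin.exists_maximalFor id _ hne
    refine ⟨a, haT, fun x hx => ?_⟩
    by_contra hax
    push_neg at hax
    exact absurd (ha hx (le_of_lt hax)) (not_le_of_gt hax)
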